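/- arXiv:0709.0011 — 2 statements merged into one kernel-verified Lean document; each statement's English description precedes it below -/
import Mathlib

section
/- Let (m_n) be the moment sequence determined over C = ℂ×ℂ by cumulants κ_n = (1,1) for n = 2 and κ_n = 0 otherwise, via m_n = Σ_{π∈NC(n)} Π_{B∈π} κ_{|B|}. Then the second component 𝔪_n of m_n is 0 for odd n and equals C(2k, k+1) for n = 2k. -/
open scoped Classical

/-- A setoid (partition) of `Fin n` is non-crossing. -/
def NCrel {n : ℕ} (π : Setoid (Fin n)) : Prop :=
  ∀ a b c d : Fin n, a < b → b < c → c < d → π a c → π b d → π a b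

instance setoidFinite {n : ℕ} : Finite (Setoid (Fin n)) :=
  Finite.of_injective (fun s => (s : Fin n → Fin n → Prop))
    (fun a b h => Setoid.ext fun x y => iff_of_eq (congrFun (congrFun h x) y))

noncomputable instance {n : ℕ} : Fintype (Setoid (Fin n)) := Fintype.ofFinite _

/-- The finset of non-crossing partitions of `Fin n`. -/
noncomputable def NCset (n : ℕ) : Finset (Setoid (Fin n)) :=
  Finset.univ.filter NCrel

/-- `Cf_π(h) = ∏_{B block of π} h_{|B|}`. -/
noncomputable def blockProd {R : Type*} [CommRing R] {n : ℕ} (π : Setoid (Fin n))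
    (h : ℕ → R) : R :=
  ∏ B ∈ (Set.toFinite π.classes).toFinset, h B.ncard

/-- moments from cumulants via the non-crossing moment-cumulant formula. -/
noncomputable def moments {R : Type*} [CommRing R] (κ : ℕ → R) (n : ℕ) : R :=
  ∑ π ∈ NCset n, blockProd π κ

/-- interleaving of `π` on positions `2i` and `σ` on positions `2i+1` of `Fin (2n)`. -/
def interleave {n : ℕ} (π σ : Setoid (Fin n)) : Setoid (Fin (2 * n)) :=
  ⟨fun x y => x.val % 2 = y.val % 2 ∧
      (x.val % 2 = 0 → π ⟨x.val / 2, by have := x.isLt; omega⟩ ⟨y.val / 2, by have := y.isLt; omega⟩) ∧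
      (x.val % 2 = 1 → σ ⟨x.val / 2, by have := x.isLt; omega⟩ ⟨y.val / 2, by have := y.isLt; omega⟩),
   by
     constructor
     · intro x; exact ⟨rfl, fun _ => π.iseqv.refl _, fun _ => σ.iseqv.refl _⟩
     · rintro x y ⟨h1, h2, h3⟩
       exact ⟨h1.symm, fun h => π.iseqv.symm (h2 (h1.trans h)),
              fun h => σ.iseqv.symm (h3 (h1.trans h))⟩
     · rintro x y z ⟨h1, h2, h3⟩ ⟨k1, k2, k3⟩
       exact ⟨h1.trans k1, fun h => π.iseqv.trans (h2 h) (k2 (h1 ▸ h)),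
              fun h => σ.iseqv.trans (h3 h) (k3 (h1 ▸ h))⟩⟩

/-- Kreweras complement: the maximal partition of the interlaced primed points
compatible (non-crossing) with `π`. -/
noncomputable def krew {n : ℕ} (π : Setoid (Fin n)) : Setoid (Fin n) :=
  sSup {σ | NCrel (interleave π σ)}

/-- `n`-th coefficient of the boxed convolution `f ⊠ g`. -/
noncomputable def boxCoeff {R : Type*} [CommRing R] (f g : ℕ → R) (n : ℕ) : R :=
  ∑ π ∈ NCset n, blockProd π f * blockProd (krew π) g

/-- `n`-th coefficient of `f ⊻ g`: as in `⊠` but summing only over non-crossing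
partitions having `{1}` as a singleton block. -/
noncomputable def veeCoeff {R : Type*} [CommRing R] (f g : ℕ → R) : ℕ → R
  | 0 => 0
  | (n + 1) =>
    ∑ π ∈ (NCset (n + 1)).filter
        (fun π => ∀ x : Fin (n + 1), π ⟨0, Nat.succ_pos n⟩ x → x = ⟨0, Nat.succ_pos n⟩),
      blockProd π f * blockProd (krew π) g

/-- substitution of formal power series without constant term, on coefficient sequences. -/
noncomputable def compSeq {R : Type*} [CommRing R] (f g : ℕ → R) (m : ℕ) : R :=
  ∑ k ∈ Finset.range (m + 1), f k *
    ∑ x ∈ Finset.Nat.antidiagonalTuple k m, ∏ i, g (x i)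

/-- coefficients of the series `z`. -/
def idSeq {R : Type*} [CommRing R] (n : ℕ) : R := if n = 1 then 1 else 0


def IsPair {n : ℕ} (π : Setoid (Fin n)) : Prop := ∀ B ∈ π.classes, B.ncard = 2

/-- the glued partition on `Fin n`, `n = a + b + 2`: pair `{0, a+1}`, `π₁` on `[1,a]`,
`π₂` on `[a+2, a+b+1]`. -/
def glue (a b : ℕ) {n : ℕ} (h : n = a + b + 2) (π₁ : Setoid (Fin a)) (π₂ : Setoid (Fin b)) :
    Setoid (Fin n) :=
  ⟨fun x y =>
    ((x.val = 0 ∨ x.val = a+1) ∧ (y.val = 0 ∨ y.val = a+1)) ∨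
    (∃ (_ : 1 ≤ x.val ∧ x.val ≤ a) (_ : 1 ≤ y.val ∧ y.val ≤ a),
        π₁ ⟨x.val - 1, by omega⟩ ⟨y.val - 1, by omega⟩) ∨
    (∃ (_ : a+2 ≤ x.val) (_ : a+2 ≤ y.val),
        π₂ ⟨x.val - (a+2), by have := x.isLt; omega⟩ ⟨y.val - (a+2), by have := y.isLt; omega⟩),
   by
    constructor
    · intro x
      rcases Nat.lt_or_ge x.val 1 with hx | hx
      · exact Or.inl ⟨Or.inl (by omega), Or.inl (by omega)⟩
      rcases Nat.lt_or_ge x.val (a+1) with hx2 | hx2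
      · exact Or.inr (Or.inl ⟨⟨hx, by omega⟩, ⟨hx, by omega⟩, π₁.refl _⟩)
      rcases Nat.lt_or_ge x.val (a+2) with hx3 | hx3
      · exact Or.inl ⟨Or.inr (by omega), Or.inr (by omega)⟩
      · exact Or.inr (Or.inr ⟨hx3, hx3, π₂.refl _⟩)
    · rintro x y (⟨h1, h2⟩ | ⟨h1, h2, h3⟩ | ⟨h1, h2, h3⟩)
      · exact Or.inl ⟨h2, h1⟩
      · exact Or.inr (Or.inl ⟨h2, h1, π₁.symm h3⟩)
      · exact Or.inr (Or.inr ⟨h2, h1, π₂.symm h3⟩)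
    · rintro x y z (⟨h1, h2⟩ | ⟨h1, h2, h3⟩ | ⟨h1, h2, h3⟩)
        (⟨k1, k2⟩ | ⟨k1, k2, k3⟩ | ⟨k1, k2, k3⟩)
      · exact Or.inl ⟨h1, k2⟩
      · omega
      · omega
      · omega
      · exact Or.inr (Or.inl ⟨h1, k2, π₁.trans h3 k3⟩)
      · omega
      · omega
      · omega
      · exact Or.inr (Or.inr ⟨h1, k2, π₂.trans h3 k3⟩)⟩

lemma glue_ncrel {a b n : ℕ} (h : n = a + b + 2) {π₁ : Setoid (Fin a)} {π₂ : Setoid (Fin b)}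
    (h₁ : NCrel π₁) (h₂ : NCrel π₂) : NCrel (glue a b h π₁ π₂) := by
  rintro x y z w hxy hyz hzw hxz hyw
  rw [Fin.lt_def] at hxy hyz hzw
  rcases hxz with ⟨hx, hz⟩ | ⟨hx, hz, hrel⟩ | ⟨hx, hz, hrel⟩
  · -- x, z ∈ {0, a+1}, so x = 0, z = a+1, y in (0,a+1), w > a+1; rel y w impossible
    have hx0 : x.val = 0 := by omega
    have hz1 : z.val = a + 1 := by omega
    exfalso
    rcases hyw with ⟨hy, hw⟩ | ⟨hy, hw, _⟩ | ⟨hy, hw, _⟩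
    · omega
    · omega
    · omega
  · -- both in [1,a]
    have hy : 1 ≤ y.val ∧ y.val ≤ a := by omega
    rcases hyw with ⟨hy', hw⟩ | ⟨hy', hw, hrel'⟩ | ⟨hy', hw, hrel'⟩
    · omega
    · refine Or.inr (Or.inl ⟨hx, hy', ?_⟩)
      exact h₁ _ _ _ _ (by simp [Fin.lt_def]; omega) (by simp [Fin.lt_def]; omega)
        (by simp [Fin.lt_def]; omega) hrel hrel'
    · omega
  · -- both ≥ a+2
    have hy : a + 2 ≤ y.val := by omega
    rcases hyw with ⟨hy', hw⟩ | ⟨hy', hw, hrel'⟩ | ⟨hy', hw, hrel'⟩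
    · omega
    · omega
    · refine Or.inr (Or.inr ⟨hx, hy', ?_⟩)
      exact h₂ _ _ _ _ (by simp [Fin.lt_def]; omega) (by simp [Fin.lt_def]; omega)
        (by simp [Fin.lt_def]; omega) hrel hrel'

lemma glue_rel_iff {a b n : ℕ} (h : n = a + b + 2) (π₁ : Setoid (Fin a)) (π₂ : Setoid (Fin b))
    (x y : Fin n) : glue a b h π₁ π₂ x y ↔
    (((x.val = 0 ∨ x.val = a+1) ∧ (y.val = 0 ∨ y.val = a+1)) ∨
    (∃ (_ : 1 ≤ x.val ∧ x.val ≤ a) (_ : 1 ≤ y.val ∧ y.val ≤ a),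
        π₁ ⟨x.val - 1, by omega⟩ ⟨y.val - 1, by omega⟩) ∨
    (∃ (_ : a+2 ≤ x.val) (_ : a+2 ≤ y.val),
        π₂ ⟨x.val - (a+2), by have := x.isLt; omega⟩ ⟨y.val - (a+2), by have := y.isLt; omega⟩)) :=
  Iff.rfl

lemma glue_isPair {a b n : ℕ} (h : n = a + b + 2) {π₁ : Setoid (Fin a)} {π₂ : Setoid (Fin b)}
    (h₁ : IsPair π₁) (h₂ : IsPair π₂) : IsPair (glue a b h π₁ π₂) := by
  rintro B ⟨y, rfl⟩
  rcases Nat.lt_or_ge y.val 1 with hy | hy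
  · -- y = 0 : class is {0, a+1}
    have : {x | glue a b h π₁ π₂ x y} = {(⟨0, by omega⟩ : Fin n), ⟨a+1, by omega⟩} := by
      ext x
      simp only [Set.mem_setOf_eq, glue_rel_iff, Set.mem_insert_iff, Set.mem_singleton_iff,
        Fin.ext_iff]
      constructor
      · rintro (⟨hx, _⟩ | ⟨_, hy', _⟩ | ⟨_, hy', _⟩) <;> omega
      · rintro (hx | hx) <;> exact Or.inl ⟨by omega, by omega⟩
    rw [this, Set.ncard_pair (by simp [Fin.ext_iff])]
  rcases Nat.lt_or_ge y.val (a+1) with hy2 | hy2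
  · -- y ∈ [1,a] : class is image of π₁-class under +1 shift
    have : {x | glue a b h π₁ π₂ x y} =
        (fun u : Fin a => (⟨u.val + 1, by omega⟩ : Fin n)) ''
          {u | π₁ u ⟨y.val - 1, by omega⟩} := by
      ext x
      simp only [Set.mem_setOf_eq, glue_rel_iff, Set.mem_image]
      constructor
      · rintro (⟨_, hy'⟩ | ⟨hx, _, hrel⟩ | ⟨_, hy', _⟩)
        · omega
        · exact ⟨⟨x.val - 1, by omega⟩, hrel, by simp [Fin.ext_iff]; omega⟩
        · omega
      · rintro ⟨u, hu, rfl⟩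
        exact Or.inr (Or.inl ⟨⟨by show 1 ≤ u.val + 1; omega, by show u.val + 1 ≤ a; omega⟩,
          ⟨by omega, by omega⟩, by convert hu using 2 <;> simp⟩)
    rw [this, Set.ncard_image_of_injective _ (fun u v huv => by
      simpa [Fin.ext_iff] using huv)]
    exact h₁ _ ⟨_, rfl⟩
  rcases Nat.lt_or_ge y.val (a+2) with hy3 | hy3
  · -- y = a+1 : class is {0, a+1}
    have : {x | glue a b h π₁ π₂ x y} = {(⟨0, by omega⟩ : Fin n), ⟨a+1, by omega⟩} := by
      ext x
      simp only [Set.mem_setOf_eq, glue_rel_iff, Set.mem_insert_iff, Set.mem_singleton_iff,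
        Fin.ext_iff]
      constructor
      · rintro (⟨hx, _⟩ | ⟨_, hy', _⟩ | ⟨_, hy', _⟩) <;> omega
      · rintro (hx | hx) <;> exact Or.inl ⟨by omega, by omega⟩
    rw [this, Set.ncard_pair (by simp [Fin.ext_iff])]
  · -- y ≥ a+2
    have : {x | glue a b h π₁ π₂ x y} =
        (fun u : Fin b => (⟨u.val + (a+2), by omega⟩ : Fin n)) ''
          {u | π₂ u ⟨y.val - (a+2), by have := y.isLt; omega⟩} := by
      ext x
      simp only [Set.mem_setOf_eq, glue_rel_iff, Set.mem_image]
      constructor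
      · rintro (⟨_, hy'⟩ | ⟨_, hy', _⟩ | ⟨hx, _, hrel⟩)
        · omega
        · omega
        · exact ⟨⟨x.val - (a+2), by have := x.isLt; omega⟩, hrel, by simp [Fin.ext_iff]; omega⟩
      · rintro ⟨u, hu, rfl⟩
        exact Or.inr (Or.inr ⟨by show a + 2 ≤ u.val + (a+2); omega, by omega, by
          convert hu using 2 <;> simp⟩)
    rw [this, Set.ncard_image_of_injective _ (fun u v huv => by
      simpa [Fin.ext_iff] using huv)]
    exact h₂ _ ⟨_, rfl⟩

section Decomp

variable {n m : ℕ} (hn : n = m + 2) (π : Setoid (Fin n))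

lemma exists_partner (hP : IsPair π) (hpos : 0 < n) :
    ∃ j : Fin n, 1 ≤ j.val ∧ ∀ x : Fin n, π x ⟨0, hpos⟩ ↔ (x = ⟨0, hpos⟩ ∨ x = j) := by
  have hC : ({x | π x ⟨0, hpos⟩} : Set (Fin n)).ncard = 2 := hP _ ⟨⟨0, hpos⟩, rfl⟩
  obtain ⟨u, v, huv, hC2⟩ := Set.ncard_eq_two.mp hC
  have hz0 : (⟨0, hpos⟩ : Fin n) ∈ ({x | π x ⟨0, hpos⟩} : Set (Fin n)) := π.refl _
  rw [hC2] at hz0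
  have key : ∃ j : Fin n, j ≠ ⟨0, hpos⟩ ∧ ({x | π x ⟨0, hpos⟩} : Set (Fin n)) = {⟨0, hpos⟩, j} := by
    rcases hz0 with h | h
    · exact ⟨v, by rw [← h] at huv; exact fun hc => huv hc.symm, by rw [hC2, ← h]⟩
    · exact ⟨u, by rw [← h] at huv; exact fun hc => huv hc, by rw [hC2, ← h, Set.pair_comm]⟩
  obtain ⟨j, hj0, hCj⟩ := key
  refine ⟨j, ?_, fun x => ?_⟩
  · rcases Nat.eq_zero_or_pos j.val with h0 | h1
    · exact absurd (Fin.ext h0) hj0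
    · exact h1
  · constructor
    · intro hx
      have : x ∈ ({x | π x ⟨0, hpos⟩} : Set (Fin n)) := hx
      rw [hCj] at this; simpa using this
    · rintro (rfl | hc)
      · exact π.refl _
      · have : j ∈ ({x | π x ⟨0, hpos⟩} : Set (Fin n)) := by rw [hCj]; simp
        rw [hc]; exact this

variable {π} {hpos : 0 < n} {j : Fin n}
variable (hNC : NCrel π) (hj1 : 1 ≤ j.val)
  (hj : ∀ x : Fin n, π x ⟨0, hpos⟩ ↔ (x = ⟨0, hpos⟩ ∨ x = j))

include hNC hj1 hj

lemma mid_closed {x y : Fin n} (hxy : π x y) (hx0 : 0 < x.val) (hxj : x.val < j.val) :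
    0 < y.val ∧ y.val < j.val := by
  set z0 : Fin n := ⟨0, hpos⟩
  have hjz : π j z0 := (hj j).mpr (Or.inr rfl)
  by_contra hcon
  have hy : y.val = 0 ∨ y.val = j.val ∨ j.val < y.val := by omega
  rcases hy with hy | hy | hy
  · have hyz0 : y = z0 := Fin.ext hy
    rw [hyz0] at hxy
    rcases (hj x).mp hxy with h | h
    · have hv : x.val = 0 := by rw [h]
      omega
    · have hv : x.val = j.val := by rw [h]
      omega
  · have hyj : y = j := Fin.ext hy
    rw [hyj] at hxy
    have : π x z0 := π.trans hxy hjz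
    rcases (hj x).mp this with h | h
    · have hv : x.val = 0 := by rw [h]
      omega
    · have hv : x.val = j.val := by rw [h]
      omega
  · have h0j : π z0 j := π.symm hjz
    have : π z0 x := hNC z0 x j y (by rw [Fin.lt_def]; exact hx0) (by rw [Fin.lt_def]; exact hxj)
      (by rw [Fin.lt_def]; exact hy) h0j hxy
    rcases (hj x).mp (π.symm this) with h | h
    · have hv : x.val = 0 := by rw [h]
      omega
    · have hv : x.val = j.val := by rw [h]
      omega

lemma upper_closed {x y : Fin n} (hxy : π x y) (hx : j.val < x.val) : j.val < y.val := by
  set z0 : Fin n := ⟨0, hpos⟩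
  by_contra hcon
  have hy : y.val = 0 ∨ y.val = j.val ∨ (0 < y.val ∧ y.val < j.val) := by omega
  rcases hy with hy | hy | hy
  · have hyz0 : y = z0 := Fin.ext hy
    rw [hyz0] at hxy
    rcases (hj x).mp hxy with h | h
    · have hv : x.val = 0 := by rw [h]
      omega
    · have hv : x.val = j.val := by rw [h]
      omega
  · have hyj : y = j := Fin.ext hy
    rw [hyj] at hxy
    have : π x z0 := π.trans hxy ((hj j).mpr (Or.inr rfl))
    rcases (hj x).mp this with h | h
    · have hv : x.val = 0 := by rw [h]
      omega
    · have hv : x.val = j.val := by rw [h]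
      omega
  · have := mid_closed hNC hj1 hj (π.symm hxy) hy.1 hy.2
    omega

end Decomp

def shiftF (s : ℕ) {k n : ℕ} (h : s + k ≤ n) : Fin k → Fin n :=
  fun u => ⟨u.val + s, by omega⟩

@[simp] lemma shiftF_val {s k n : ℕ} (h : s + k ≤ n) (u : Fin k) :
    (shiftF s h u).val = u.val + s := rfl

lemma shiftF_inj {s k n : ℕ} (h : s + k ≤ n) : Function.Injective (shiftF s h) := by
  intro u v huv
  have := congrArg Fin.val huv
  simp at this
  exact Fin.ext this

lemma ncrel_comap_shift {s k n : ℕ} (h : s + k ≤ n) {π : Setoid (Fin n)} (hNC : NCrel π) :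
    NCrel (Setoid.comap (shiftF s h) π) := by
  intro p q r t hpq hqr hrt h1 h2
  rw [Fin.lt_def] at hpq hqr hrt
  exact hNC _ _ _ _ (by simp only [Fin.lt_def, shiftF_val]; omega)
    (by simp only [Fin.lt_def, shiftF_val]; omega) (by simp only [Fin.lt_def, shiftF_val]; omega)
    h1 h2

lemma exists_glue_eq {n m : ℕ} (hn : n = m + 2) (π : Setoid (Fin n))
    (hNC : NCrel π) (hP : IsPair π) :
    ∃ (a b : ℕ) (hab : a + b = m) (π₁ : Setoid (Fin a)) (π₂ : Setoid (Fin b)),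
      NCrel π₁ ∧ IsPair π₁ ∧ NCrel π₂ ∧ IsPair π₂ ∧
        glue a b (by omega) π₁ π₂ = π := by
  have hpos : 0 < n := by omega
  obtain ⟨j, hj1, hj⟩ := exists_partner π hP hpos
  have hjlt : j.val < n := j.isLt
  obtain ⟨a, hja⟩ : ∃ a, j.val = a + 1 := ⟨j.val - 1, by omega⟩
  obtain ⟨b, hab⟩ : ∃ b, a + b = m := ⟨m - a, by omega⟩
  have h1a : 1 + a ≤ n := by omega
  have h2b : (a + 2) + b ≤ n := by omega
  refine ⟨a, b, hab, Setoid.comap (shiftF 1 h1a) π, Setoid.comap (shiftF (a+2) h2b) π,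
    ncrel_comap_shift _ hNC, ?_, ncrel_comap_shift _ hNC, ?_, ?_⟩
  · -- IsPair π₁
    rintro B ⟨v, rfl⟩
    have hfv1 : 0 < (shiftF 1 h1a v).val := by simp
    have hfv2 : (shiftF 1 h1a v).val < j.val := by simp; omega
    have hD : ({x | π x (shiftF 1 h1a v)} : Set (Fin n)) =
        shiftF 1 h1a '' {u | Setoid.comap (shiftF 1 h1a) π u v} := by
      ext x
      simp only [Set.mem_setOf_eq, Set.mem_image]
      constructor
      · intro hx
        have hxb := mid_closed hNC hj1 hj (π.symm hx) hfv1 hfv2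
        refine ⟨⟨x.val - 1, by omega⟩, ?_, by simp [shiftF, Fin.ext_iff]; omega⟩
        show π (shiftF 1 h1a _) (shiftF 1 h1a v)
        convert hx using 2
        simp [shiftF, Fin.ext_iff]; omega
      · rintro ⟨u, hu, rfl⟩
        exact hu
    have h2 : ({x | π x (shiftF 1 h1a v)} : Set (Fin n)).ncard = 2 := hP _ ⟨_, rfl⟩
    rw [hD, Set.ncard_image_of_injective _ (shiftF_inj h1a)] at h2
    exact h2
  · -- IsPair π₂
    rintro B ⟨v, rfl⟩
    have hgv : j.val < (shiftF (a+2) h2b v).val := by simp; omega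
    have hD : ({x | π x (shiftF (a+2) h2b v)} : Set (Fin n)) =
        shiftF (a+2) h2b '' {u | Setoid.comap (shiftF (a+2) h2b) π u v} := by
      ext x
      simp only [Set.mem_setOf_eq, Set.mem_image]
      constructor
      · intro hx
        have hxb := upper_closed hNC hj1 hj (π.symm hx) hgv
        refine ⟨⟨x.val - (a + 2), by have := x.isLt; omega⟩, ?_,
          by simp [shiftF, Fin.ext_iff]; omega⟩
        show π (shiftF (a+2) h2b _) (shiftF (a+2) h2b v)
        convert hx using 2
        simp [shiftF, Fin.ext_iff]; omega
      · rintro ⟨u, hu, rfl⟩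
        exact hu
    have h2 : ({x | π x (shiftF (a+2) h2b v)} : Set (Fin n)).ncard = 2 := hP _ ⟨_, rfl⟩
    rw [hD, Set.ncard_image_of_injective _ (shiftF_inj h2b)] at h2
    exact h2
  · -- glue = π
    have hjz : π j ⟨0, hpos⟩ := (hj j).mpr (Or.inr rfl)
    have hmem : ∀ u : Fin n, (u.val = 0 ∨ u.val = a + 1) → π u ⟨0, hpos⟩ := by
      intro u hu
      rcases hu with hu | hu
      · have he : u = ⟨0, hpos⟩ := Fin.ext hu
        subst he; exact π.refl _
      · have he : u = j := Fin.ext (by omega)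
        subst he; exact hjz
    apply Setoid.ext
    intro x y
    rw [glue_rel_iff]
    constructor
    · rintro (⟨hx, hy⟩ | ⟨hx, hy, hrel⟩ | ⟨hx, hy, hrel⟩)
      · exact π.trans (hmem x hx) (π.symm (hmem y hy))
      · have : π (shiftF 1 h1a ⟨x.val - 1, by omega⟩) (shiftF 1 h1a ⟨y.val - 1, by omega⟩) := hrel
        convert this using 2 <;> simp [shiftF, Fin.ext_iff] <;> omega
      · have : π (shiftF (a+2) h2b ⟨x.val - (a+2), by have := x.isLt; omega⟩)
            (shiftF (a+2) h2b ⟨y.val - (a+2), by have := y.isLt; omega⟩) := hrel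
        convert this using 2 <;> simp [shiftF, Fin.ext_iff] <;> omega
    · intro hxy
      rcases Nat.lt_or_ge x.val 1 with hx | hx
      · -- x = 0
        have hx0 : x = ⟨0, hpos⟩ := Fin.ext (by show x.val = 0; omega)
        have hy0 : π y ⟨0, hpos⟩ := π.symm (hx0 ▸ hxy)
        rcases (hj y).mp hy0 with h | h
        · exact Or.inl ⟨Or.inl (by omega), Or.inl (by rw [h])⟩
        · exact Or.inl ⟨Or.inl (by omega), Or.inr (by rw [h]; omega)⟩
      rcases Nat.lt_or_ge x.val (a+1) with hx2 | hx2
      · -- 1 ≤ x ≤ a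
        have hxb := mid_closed hNC hj1 hj hxy (by omega) (by omega)
        refine Or.inr (Or.inl ⟨⟨hx, by omega⟩, ⟨by omega, by omega⟩, ?_⟩)
        show π (shiftF 1 h1a _) (shiftF 1 h1a _)
        convert hxy using 2 <;> simp [shiftF, Fin.ext_iff] <;> omega
      rcases Nat.lt_or_ge x.val (a+2) with hx3 | hx3
      · -- x = a+1 = j
        have hxj : x = j := Fin.ext (by omega)
        have hy0 : π y ⟨0, hpos⟩ := π.trans (π.symm (hxj ▸ hxy)) hjz
        rcases (hj y).mp hy0 with h | h
        · exact Or.inl ⟨Or.inr (by omega), Or.inl (by rw [h])⟩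
        · exact Or.inl ⟨Or.inr (by omega), Or.inr (by rw [h]; omega)⟩
      · -- x ≥ a+2
        have hyb := upper_closed hNC hj1 hj hxy (by omega)
        refine Or.inr (Or.inr ⟨hx3, by omega, ?_⟩)
        show π (shiftF (a+2) h2b _) (shiftF (a+2) h2b _)
        convert hxy using 2 <;> simp [shiftF, Fin.ext_iff] <;> omega

lemma glue_a_eq {n a b a' b' : ℕ} (h : n = a + b + 2) (h' : n = a' + b' + 2)
    {π₁ : Setoid (Fin a)} {π₂ : Setoid (Fin b)} {π₁' : Setoid (Fin a')} {π₂' : Setoid (Fin b')}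
    (heq : glue a b h π₁ π₂ = glue a' b' h' π₁' π₂') : a = a' := by
  have h2 : glue a' b' h' π₁' π₂' ⟨0, by omega⟩ ⟨a' + 1, by omega⟩ :=
    Or.inl ⟨Or.inl rfl, Or.inr rfl⟩
  rw [← heq] at h2
  rcases h2 with ⟨hx, hy⟩ | ⟨hx, _, _⟩ | ⟨hx, _, _⟩
  · simp only [] at hx hy; omega
  · exact absurd hx.1 (by norm_num)
  · exact absurd hx (by norm_num)

lemma glue_parts_eq {n a b : ℕ} (h h' : n = a + b + 2)
    {π₁ π₁' : Setoid (Fin a)} {π₂ π₂' : Setoid (Fin b)}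
    (heq : glue a b h π₁ π₂ = glue a b h' π₁' π₂') : π₁ = π₁' ∧ π₂ = π₂' := by
  have key1 : ∀ (πa : Setoid (Fin a)) (πb : Setoid (Fin b)) (u v : Fin a),
      glue a b h πa πb ⟨u.val + 1, by omega⟩ ⟨v.val + 1, by omega⟩ ↔ πa u v := by
    intro πa πb u v
    constructor
    · rintro (⟨hx, hy⟩ | ⟨hx, hy, hrel⟩ | ⟨hx, hy, hrel⟩)
      · simp only [] at hx hy; have := u.isLt; have := v.isLt; omega
      · convert hrel using 2 <;> simp [Fin.ext_iff]
      · simp only [] at hx; have := u.isLt; omega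
    · intro hrel
      refine Or.inr (Or.inl ⟨⟨by simp, by simpa [Nat.succ_le_iff] using u.isLt⟩,
        ⟨by simp, by simpa [Nat.succ_le_iff] using v.isLt⟩, ?_⟩)
      convert hrel using 2 <;> simp [Fin.ext_iff]
  have key2 : ∀ (πa : Setoid (Fin a)) (πb : Setoid (Fin b)) (u v : Fin b),
      glue a b h πa πb ⟨u.val + (a+2), by omega⟩ ⟨v.val + (a+2), by omega⟩ ↔ πb u v := by
    intro πa πb u v
    constructor
    · rintro (⟨hx, hy⟩ | ⟨hx, hy, hrel⟩ | ⟨hx, hy, hrel⟩)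
      · simp only [] at hx hy; omega
      · simp only [] at hx; omega
      · convert hrel using 2 <;> simp
    · intro hrel
      refine Or.inr (Or.inr ⟨by simp, by simp, ?_⟩)
      convert hrel using 2 <;> simp
  constructor
  · apply Setoid.ext; intro u v
    rw [← key1 π₁ π₂ u v, heq, key1]
  · apply Setoid.ext; intro u v
    rw [← key2 π₁ π₂ u v, heq, key2]

noncomputable def Pset (n : ℕ) : Finset (Setoid (Fin n)) :=
  Finset.univ.filter (fun π => NCrel π ∧ IsPair π)

lemma card_Pset_rec (m : ℕ) : (Pset (m+2)).card =
    ∑ p ∈ Finset.HasAntidiagonal.antidiagonal m, (Pset p.1).card * (Pset p.2).card := by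
  classical
  have key : ((Finset.HasAntidiagonal.antidiagonal m).sigma
      (fun p => (Pset p.1) ×ˢ (Pset p.2))).card = (Pset (m+2)).card := by
    refine Finset.card_bij
      (fun x hx => glue x.1.1 x.1.2
        (by have := Finset.HasAntidiagonal.mem_antidiagonal.mp (Finset.mem_sigma.mp hx).1; omega)
        x.2.1 x.2.2) ?_ ?_ ?_
    · rintro ⟨⟨a, b⟩, π₁, π₂⟩ hx
      obtain ⟨hab, hp⟩ := Finset.mem_sigma.mp hx
      obtain ⟨h1, h2⟩ := Finset.mem_product.mp hp
      obtain ⟨-, hNC1, hP1⟩ := Finset.mem_filter.mp h1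
      obtain ⟨-, hNC2, hP2⟩ := Finset.mem_filter.mp h2
      exact Finset.mem_filter.mpr ⟨Finset.mem_univ _,
        glue_ncrel _ hNC1 hNC2, glue_isPair _ hP1 hP2⟩
    · rintro ⟨⟨a, b⟩, π₁, π₂⟩ hx ⟨⟨a', b'⟩, π₁', π₂'⟩ hx' heq
      have hab := Finset.HasAntidiagonal.mem_antidiagonal.mp (Finset.mem_sigma.mp hx).1
      have hab' := Finset.HasAntidiagonal.mem_antidiagonal.mp (Finset.mem_sigma.mp hx').1
      simp only [] at hab hab'
      have ha : a = a' := glue_a_eq _ _ heq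
      subst ha
      have hb : b = b' := by omega
      subst hb
      obtain ⟨e1, e2⟩ := glue_parts_eq _ _ heq
      cases e1; cases e2; rfl
    · intro σ hσ
      obtain ⟨-, hNC, hP⟩ := Finset.mem_filter.mp hσ
      obtain ⟨a, b, hab, π₁, π₂, hNC1, hP1, hNC2, hP2, hglue⟩ :=
        exists_glue_eq rfl σ hNC hP
      refine ⟨⟨(a, b), π₁, π₂⟩, ?_, hglue⟩
      refine Finset.mem_sigma.mpr ⟨Finset.HasAntidiagonal.mem_antidiagonal.mpr hab,
        Finset.mem_product.mpr ⟨?_, ?_⟩⟩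
      · exact Finset.mem_filter.mpr ⟨Finset.mem_univ _, hNC1, hP1⟩
      · exact Finset.mem_filter.mpr ⟨Finset.mem_univ _, hNC2, hP2⟩
  rw [← key, Finset.card_sigma]
  exact Finset.sum_congr rfl fun p _ => Finset.card_product _ _

lemma classes_sum_ncard {n : ℕ} (π : Setoid (Fin n)) :
    ∑ B ∈ (Set.toFinite π.classes).toFinset, B.ncard = n := by
  classical
  have hdisj : ∀ B ∈ (Set.toFinite π.classes).toFinset, ∀ C ∈ (Set.toFinite π.classes).toFinset,
      B ≠ C → Disjoint B.toFinset C.toFinset := by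
    intro B hB C hC hne
    rw [Set.Finite.mem_toFinset] at hB hC
    have := (Setoid.isPartition_classes π).pairwiseDisjoint hB hC hne
    exact Finset.disjoint_coe.mp (by simpa [Function.onFun] using this)
  have hcover : ((Set.toFinite π.classes).toFinset).biUnion (fun B => B.toFinset) =
      Finset.univ := by
    ext x
    simp only [Finset.mem_biUnion, Set.Finite.mem_toFinset, Set.mem_toFinset, Finset.mem_univ,
      iff_true]
    exact ⟨_, π.mem_classes x, π.refl x⟩
  calc ∑ B ∈ (Set.toFinite π.classes).toFinset, B.ncard
      = ∑ B ∈ (Set.toFinite π.classes).toFinset, B.toFinset.card := by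
        refine Finset.sum_congr rfl fun B _ => ?_
        exact Set.ncard_eq_toFinset_card' B
    _ = (((Set.toFinite π.classes).toFinset).biUnion (fun B => B.toFinset)).card :=
        (Finset.card_biUnion hdisj).symm
    _ = n := by rw [hcover]; simp

lemma isPair_card_classes {n : ℕ} {π : Setoid (Fin n)} (hP : IsPair π) :
    2 * ((Set.toFinite π.classes).toFinset).card = n := by
  have := classes_sum_ncard π
  rw [Finset.sum_congr rfl (fun B hB => hP B ((Set.Finite.mem_toFinset _).mp hB))] at this
  simpa [mul_comm] using this

lemma isPair_even {n : ℕ} {π : Setoid (Fin n)} (hP : IsPair π) : Even n := by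
  have := isPair_card_classes hP
  exact ⟨((Set.toFinite π.classes).toFinset).card, by omega⟩

lemma Pset_odd_empty {n : ℕ} (hn : Odd n) : Pset n = ∅ := by
  rw [Finset.eq_empty_iff_forall_notMem]
  intro π hπ
  obtain ⟨-, -, hP⟩ := Finset.mem_filter.mp hπ
  exact (Nat.not_even_iff_odd.mpr hn) (isPair_even hP)

instance : Subsingleton (Setoid (Fin 0)) :=
  ⟨fun a b => Setoid.ext fun x => x.elim0⟩

lemma card_Pset_zero : (Pset 0).card = 1 := by
  have h1 : Pset 0 = Finset.univ := by
    refine Finset.filter_true_of_mem fun π _ => ⟨fun a => a.elim0, ?_⟩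
    rintro B ⟨y, -⟩
    exact y.elim0
  rw [h1, Finset.card_univ]
  exact Fintype.card_eq_one_iff.mpr ⟨⊥, fun σ => Subsingleton.elim _ _⟩

lemma card_Pset_even : ∀ k : ℕ, (Pset (2 * k)).card = catalan k := by
  intro k
  induction k using Nat.strong_induction_on with
  | _ k ih =>
    match k with
    | 0 => simpa using card_Pset_zero
    | (k + 1) =>
      have h2 : 2 * (k + 1) = 2 * k + 2 := by ring
      rw [h2, card_Pset_rec, catalan_succ']
      have hsub : (Finset.HasAntidiagonal.antidiagonal k).image (fun q : ℕ × ℕ => (2*q.1, 2*q.2)) ⊆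
          Finset.HasAntidiagonal.antidiagonal (2*k) := by
        intro p hp
        obtain ⟨q, hq, rfl⟩ := Finset.mem_image.mp hp
        have := Finset.HasAntidiagonal.mem_antidiagonal.mp hq
        exact Finset.HasAntidiagonal.mem_antidiagonal.mpr (by omega)
      rw [← Finset.sum_subset hsub]
      · rw [Finset.sum_image (by intro q hq r hr h; simpa [Prod.ext_iff] using h)]
        refine Finset.sum_congr rfl fun q hq => ?_
        have hqk := Finset.HasAntidiagonal.mem_antidiagonal.mp hq
        rw [ih q.1 (by omega), ih q.2 (by omega)]
      · intro p hp hnotin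
        have hpk := Finset.HasAntidiagonal.mem_antidiagonal.mp hp
        by_cases h1 : Even p.1
        · obtain ⟨i, hi⟩ := h1
          obtain ⟨j, hj⟩ : Even p.2 := by
            rcases Nat.even_or_odd p.2 with h | h
            · exact h
            · exfalso; obtain ⟨j, hj⟩ := h; omega
          exfalso
          apply hnotin
          refine Finset.mem_image.mpr ⟨(i, j), Finset.HasAntidiagonal.mem_antidiagonal.mpr (by omega), ?_⟩
          simp [Prod.ext_iff]; omega
        · rw [Pset_odd_empty (Nat.not_even_iff_odd.mp h1)]
          simp

lemma Pset_eq_filter (n : ℕ) : Pset n = (NCset n).filter IsPair := by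
  rw [NCset, Pset, Finset.filter_filter]

lemma blockProd_of_not_isPair {n : ℕ} {π : Setoid (Fin n)} (κ : ℕ → DualNumber ℂ)
    (hκ : ∀ m, κ m = if m = 2 then 1 + DualNumber.eps else 0) (h : ¬ IsPair π) :
    blockProd π κ = 0 := by
  rw [IsPair] at h
  push_neg at h
  obtain ⟨B, hB, hB2⟩ := h
  refine Finset.prod_eq_zero ((Set.Finite.mem_toFinset _).mpr hB) ?_
  rw [hκ, if_neg hB2]

lemma blockProd_of_isPair {n : ℕ} {π : Setoid (Fin n)} (κ : ℕ → DualNumber ℂ)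
    (hκ : ∀ m, κ m = if m = 2 then 1 + DualNumber.eps else 0) (h : IsPair π) :
    blockProd π κ = (1 + DualNumber.eps) ^ (n / 2) := by
  rw [blockProd]
  rw [Finset.prod_congr rfl (fun B hB => by
    rw [h B ((Set.Finite.mem_toFinset _).mp hB), hκ, if_pos rfl])]
  rw [Finset.prod_const]
  congr 1
  have := isPair_card_classes h
  omega

lemma moments_eq (κ : ℕ → DualNumber ℂ)
    (hκ : ∀ m, κ m = if m = 2 then 1 + DualNumber.eps else 0) (n : ℕ) :
    moments κ n = (Pset n).card • (1 + DualNumber.eps) ^ (n / 2) := by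
  rw [moments, ← Finset.sum_filter_add_sum_filter_not (NCset n) IsPair]
  have h2 : ∑ π ∈ (NCset n).filter (fun π => ¬ IsPair π), blockProd π κ = 0 :=
    Finset.sum_eq_zero fun π hπ =>
      blockProd_of_not_isPair κ hκ (Finset.mem_filter.mp hπ).2
  rw [h2, add_zero, ← Pset_eq_filter]
  rw [Finset.sum_congr rfl (fun π hπ => blockProd_of_isPair κ hκ
    (Finset.mem_filter.mp ((Pset_eq_filter n) ▸ hπ)).2)]
  rw [Finset.sum_const]

lemma snd_one_add_eps_pow (k : ℕ) :
    ((1 + DualNumber.eps : DualNumber ℂ) ^ k).snd = (k : ℂ) := by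
  rw [TrivSqZeroExt.snd_pow]
  simp

lemma choose_eq_mul_catalan (k : ℕ) : Nat.choose (2 * k) (k + 1) = k * catalan k := by
  have h1 := Nat.choose_succ_right_eq (2 * k) k
  have h2 := succ_mul_catalan_eq_centralBinom k
  have h3 : Nat.centralBinom k = Nat.choose (2 * k) k := rfl
  have h4 : 2 * k - k = k := by omega
  rw [h4] at h1
  have : Nat.choose (2*k) (k+1) * (k+1) = (k * catalan k) * (k+1) := by
    rw [h1, ← h3, ← h2]; ring
  exact Nat.eq_of_mul_eq_mul_right (by omega) this

/-- The moment sequence over `C = ℂ×ℂ` (the dual numbers over `ℂ`) determined by the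
cumulants `κ₂ = (1,1)`, `κ_n = 0` otherwise, has second components `0` in odd degrees
and `C(2k, k+1)` in degree `2k`. -/
theorem typeB_clt_second_components (κ : ℕ → DualNumber ℂ)
    (hκ : ∀ n, κ n = if n = 2 then 1 + DualNumber.eps else 0) :
    (∀ n, Odd n → (moments κ n).snd = 0) ∧
    (∀ k : ℕ, (moments κ (2 * k)).snd = (Nat.choose (2 * k) (k + 1) : ℂ)) := by
  constructor
  · intro n hn
    rw [moments_eq κ hκ, Pset_odd_empty hn]
    simp
  · intro k
    rw [moments_eq κ hκ, card_Pset_even k]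
    have hdiv : 2 * k / 2 = k := by omega
    rw [hdiv, nsmul_eq_mul, TrivSqZeroExt.snd_mul]
    simp only [TrivSqZeroExt.snd_natCast, TrivSqZeroExt.fst_natCast]
    rw [snd_one_add_eps_pow, choose_eq_mul_catalan]
    push_cast
    ring_nf
    simp [mul_comm]
end

section
/- Let α ≠ 0 be real and define 𝔪₂ = 2(λ+λ²)α², 𝔪₃ = 3(λ+3λ²+λ³)α³, 𝔪₄ = 4(λ+6λ²+6λ³+λ⁴)α⁴. Then for all sufficiently small λ > 0, the Hamburger moment inequality 𝔪₂·𝔪₄ ≥ 𝔪₃² fails; hence (𝔪_n) is not the moment sequence of a positive Borel measure on ℝ. -/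
open MeasureTheory

/-- Cauchy–Schwarz for moments: if `x^2, x^3, x^4` are integrable then
`(∫ x^3)^2 ≤ (∫ x^2)(∫ x^4)`. -/
lemma moment_cs (μ : Measure ℝ) (h2 : Integrable (fun x : ℝ => x ^ 2) μ)
    (h3 : Integrable (fun x : ℝ => x ^ 3) μ) (h4 : Integrable (fun x : ℝ => x ^ 4) μ) :
    (∫ x, x ^ 3 ∂μ) ^ 2 ≤ (∫ x, x ^ 2 ∂μ) * (∫ x, x ^ 4 ∂μ) := by
  set m2 := ∫ x, x ^ 2 ∂μ
  set m3 := ∫ x, x ^ 3 ∂μ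
  set m4 := ∫ x, x ^ 4 ∂μ
  have key : ∀ t : ℝ, 0 ≤ m2 * (t * t) + (2 * m3) * t + m4 := by
    intro t
    have hf : Integrable (fun x : ℝ => t ^ 2 * x ^ 2 + 2 * t * x ^ 3) μ :=
      (h2.const_mul _).add (h3.const_mul _)
    have hnn : 0 ≤ ∫ x, (t ^ 2 * x ^ 2 + 2 * t * x ^ 3 + x ^ 4) ∂μ := by
      refine integral_nonneg fun x => ?_
      have : t ^ 2 * x ^ 2 + 2 * t * x ^ 3 + x ^ 4 = (t * x + x ^ 2) ^ 2 := by ring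
      rw [this]; positivity
    have heq : ∫ x, (t ^ 2 * x ^ 2 + 2 * t * x ^ 3 + x ^ 4) ∂μ
        = t ^ 2 * m2 + 2 * t * m3 + m4 := by
      rw [integral_add hf h4, integral_add (h2.const_mul _) (h3.const_mul _),
        integral_const_mul, integral_const_mul]
    rw [heq] at hnn
    nlinarith [hnn]
  have hd := discrim_le_zero key
  rw [discrim] at hd
  nlinarith [hd]

/-- Let `α ≠ 0` and `𝔪₂ = 2(λ+λ²)α²`, `𝔪₃ = 3(λ+3λ²+λ³)α³`,
`𝔪₄ = 4(λ+6λ²+6λ³+λ⁴)α⁴`.  For all sufficiently small `λ > 0` the Hamburger moment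
inequality `𝔪₂𝔪₄ ≥ 𝔪₃²` fails; hence these are not moments of a positive Borel
measure on `ℝ`. -/
theorem typeB_poisson_not_moment_sequence (α : ℝ) (hα : α ≠ 0) :
    ∃ lam0 > (0 : ℝ), ∀ lam : ℝ, 0 < lam → lam < lam0 →
      (2 * (lam + lam ^ 2) * α ^ 2) * (4 * (lam + 6 * lam ^ 2 + 6 * lam ^ 3 + lam ^ 4) * α ^ 4)
        < (3 * (lam + 3 * lam ^ 2 + lam ^ 3) * α ^ 3) ^ 2 ∧
      ¬ ∃ μ : Measure ℝ,
          (∫ x, x ^ 2 ∂μ = 2 * (lam + lam ^ 2) * α ^ 2) ∧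
          (∫ x, x ^ 3 ∂μ = 3 * (lam + 3 * lam ^ 2 + lam ^ 3) * α ^ 3) ∧
          (∫ x, x ^ 4 ∂μ = 4 * (lam + 6 * lam ^ 2 + 6 * lam ^ 3 + lam ^ 4) * α ^ 4) ∧
          (Integrable (fun x : ℝ => x ^ 2) μ) ∧ (Integrable (fun x : ℝ => x ^ 3) μ) ∧
          (Integrable (fun x : ℝ => x ^ 4) μ) := by
  refine ⟨1/2, by norm_num, fun lam hl hl2 => ?_⟩
  have hα6 : (0:ℝ) < α ^ 6 := by positivity
  have hineq : (2 * (lam + lam ^ 2) * α ^ 2) *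
      (4 * (lam + 6 * lam ^ 2 + 6 * lam ^ 3 + lam ^ 4) * α ^ 4)
        < (3 * (lam + 3 * lam ^ 2 + lam ^ 3) * α ^ 3) ^ 2 := by
    have h : 8 * (lam + lam ^ 2) * (lam + 6 * lam ^ 2 + 6 * lam ^ 3 + lam ^ 4)
        < 9 * (lam + 3 * lam ^ 2 + lam ^ 3) ^ 2 := by
      nlinarith [sq_nonneg (1 - lam), sq_nonneg (lam * (1 - lam)), sq_nonneg lam,
        mul_pos hl hl, sq_nonneg (lam ^ 2)]
    calc (2 * (lam + lam ^ 2) * α ^ 2) *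
          (4 * (lam + 6 * lam ^ 2 + 6 * lam ^ 3 + lam ^ 4) * α ^ 4)
        = (8 * (lam + lam ^ 2) * (lam + 6 * lam ^ 2 + 6 * lam ^ 3 + lam ^ 4)) * α ^ 6 := by ring
      _ < (9 * (lam + 3 * lam ^ 2 + lam ^ 3) ^ 2) * α ^ 6 := by
          exact mul_lt_mul_of_pos_right h hα6
      _ = (3 * (lam + 3 * lam ^ 2 + lam ^ 3) * α ^ 3) ^ 2 := by ring
  refine ⟨hineq, ?_⟩
  rintro ⟨μ, hm2, hm3, hm4, h2, h3, h4⟩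
  have := moment_cs μ h2 h3 h4
  rw [hm2, hm3, hm4] at this
  linarith [hineq]
end
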